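/- arXiv:2604.24803 — 2 statements merged into one kernel-verified Lean document; each statement's English description precedes it below -/
import Mathlib

section
/- Let F : ℝ^d → ℝ be L-Lipschitz (L > 0) with respect to the Euclidean norm, let μ ∈ ℝ^d, let Σ ∈ ℝ^{d×d} be symmetric positive definite, and let q > 0. Suppose F(μ) ≥ c for some c > 0, and suppose the confinement condition ‖Σ‖_op ≤ c² / (4·L²·q) holds. If Θ is a random vector in ℝ^d with P[Θ ∈ T_q] = 1, where T_q is the trust region, then E[F(Θ)] ≥ c/2. -/
open MeasureTheory

/-- Squared Euclidean norm expression `‖x‖₂ = √(∑ xᵢ²)` on `Fin d → ℝ`. -/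
noncomputable def enorm2 {d : ℕ} (x : Fin d → ℝ) : ℝ := Real.sqrt (∑ i, x i ^ 2)

/-- Mahalanobis quadratic form `(θ − μ)ᵀ Σ⁻¹ (θ − μ)`. -/
noncomputable def mahal {d : ℕ} (S : Matrix (Fin d) (Fin d) ℝ) (μ θ : Fin d → ℝ) : ℝ :=
  dotProduct (θ - μ) (Matrix.mulVec S⁻¹ (θ - μ))

/-- The trust region `T_q = {θ : (θ − μ)ᵀ Σ⁻¹ (θ − μ) ≤ q}`. -/
def trustRegion {d : ℕ} (S : Matrix (Fin d) (Fin d) ℝ) (μ : Fin d → ℝ) (q : ℝ) :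
    Set (Fin d → ℝ) := {θ | mahal S μ θ ≤ q}

/-- The ℓ²→ℓ² operator norm of a matrix (its largest eigenvalue when PSD). -/
noncomputable def matOpNorm {d : ℕ} (S : Matrix (Fin d) (Fin d) ℝ) : ℝ :=
  ‖Matrix.toEuclideanCLM (𝕜 := ℝ) S‖

/-- Symmetry of the bilinear form of a positive definite (hence Hermitian) real matrix. -/
lemma dot_mulVec_symm {d : ℕ} {S : Matrix (Fin d) (Fin d) ℝ} (hS : S.PosDef)
    (u v : Fin d → ℝ) :
    dotProduct u (S.mulVec v) = dotProduct v (S.mulVec u) := by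
  rw [Matrix.dotProduct_mulVec u, ← Matrix.mulVec_transpose,
    ← Matrix.conjTranspose_eq_transpose_of_trivial, hS.isHermitian.eq,
    dotProduct_comm]

/-- Cauchy–Schwarz for the bilinear form of a positive definite matrix. -/
lemma cauchy_schwarz_posdef {d : ℕ} {S : Matrix (Fin d) (Fin d) ℝ} (hS : S.PosDef)
    (x y : Fin d → ℝ) :
    (dotProduct x (S.mulVec y))^2 ≤
      (dotProduct x (S.mulVec x)) * (dotProduct y (S.mulVec y)) := by
  have hnn : ∀ u : Fin d → ℝ, 0 ≤ dotProduct u (S.mulVec u) := by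
    intro u
    have := hS.posSemidef.dotProduct_mulVec_nonneg u
    simpa using this
  have hd : discrim (dotProduct y (S.mulVec y)) (2 * dotProduct x (S.mulVec y))
      (dotProduct x (S.mulVec x)) ≤ 0 := by
    apply discrim_le_zero
    intro t
    have h0 := hnn (x + t • y)
    have hexp : dotProduct (x + t • y) (S.mulVec (x + t • y))
        = dotProduct y (S.mulVec y) * t^2 + 2 * dotProduct x (S.mulVec y) * t
          + dotProduct x (S.mulVec x) := by
      rw [Matrix.mulVec_add, Matrix.mulVec_smul]
      simp [add_dotProduct, dotProduct_add, smul_dotProduct,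
        dotProduct_smul, dot_mulVec_symm hS y x, smul_eq_mul]
      ring
    linarith [hexp ▸ h0]
  rw [discrim] at hd
  nlinarith [hd]

/-- The quadratic form is bounded by the operator norm times the squared Euclidean norm. -/
lemma dot_mulVec_le_opNorm {d : ℕ} (S : Matrix (Fin d) (Fin d) ℝ) (x : Fin d → ℝ) :
    dotProduct x (S.mulVec x) ≤ matOpNorm S * dotProduct x x := by
  set x' : EuclideanSpace ℝ (Fin d) := (WithLp.equiv 2 _).symm x with hx'
  have h1 : dotProduct x (S.mulVec x)
      = @inner ℝ _ _ x' ((Matrix.toEuclideanCLM (𝕜 := ℝ) S) x') := by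
    rw [Matrix.toEuclideanCLM_toLp]
    simp [PiLp.inner_apply, dotProduct, Matrix.toLin'_apply, hx', mul_comm]
  have h2 : dotProduct x x = ‖x'‖^2 := by
    rw [← real_inner_self_eq_norm_sq]
    simp [PiLp.inner_apply, dotProduct, hx']
    rw [EuclideanSpace.norm_sq_eq]
    simp [Real.norm_eq_abs, sq]
  rw [h1, h2]
  calc @inner ℝ _ _ x' ((Matrix.toEuclideanCLM (𝕜 := ℝ) S) x')
      ≤ ‖(Matrix.toEuclideanCLM (𝕜 := ℝ) S) x'‖ * ‖x'‖ := by
        simpa [mul_comm] using real_inner_le_norm x' ((Matrix.toEuclideanCLM (𝕜 := ℝ) S) x')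
    _ ≤ (matOpNorm S * ‖x'‖) * ‖x'‖ :=
        mul_le_mul_of_nonneg_right ((Matrix.toEuclideanCLM (𝕜 := ℝ) S).le_opNorm x')
          (norm_nonneg _)
    _ = matOpNorm S * ‖x'‖^2 := by ring

/-- Points in the trust region are within Euclidean distance `√(‖S‖ q)` of the center. -/
lemma enorm2_sq_le_of_mem {d : ℕ} {S : Matrix (Fin d) (Fin d) ℝ} (hS : S.PosDef)
    {μv θ : Fin d → ℝ} {q : ℝ} (hq : 0 < q) (hθ : θ ∈ trustRegion S μv q) :
    ∑ i, (θ - μv) i ^ 2 ≤ matOpNorm S * q := by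
  set x : Fin d → ℝ := θ - μv with hx
  have hm : dotProduct x (S⁻¹.mulVec x) ≤ q := hθ
  have hm0 : 0 ≤ dotProduct x (S⁻¹.mulVec x) := by
    have := hS.inv.posSemidef.dotProduct_mulVec_nonneg x
    simpa using this
  have hSx0 : 0 ≤ dotProduct x (S.mulVec x) := by
    have := hS.posSemidef.dotProduct_mulVec_nonneg x
    simpa using this
  have hxx0 : 0 ≤ dotProduct x x := by
    simpa [dotProduct, sq] using Finset.sum_nonneg fun i _ => mul_self_nonneg (x i)
  have hinv : S.mulVec (S⁻¹.mulVec x) = x := by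
    rw [Matrix.mulVec_mulVec, Matrix.mul_nonsing_inv _ (isUnit_iff_ne_zero.2 hS.det_pos.ne'),
      Matrix.one_mulVec]
  have hcs := cauchy_schwarz_posdef hS x (S⁻¹.mulVec x)
  rw [hinv] at hcs
  have hyy : dotProduct (S⁻¹.mulVec x) x = dotProduct x (S⁻¹.mulVec x) :=
    dotProduct_comm _ _
  rw [hyy] at hcs
  -- hcs : (x ⬝ᵥ x)^2 ≤ (x ⬝ᵥ S x) * (x ⬝ᵥ S⁻¹ x)
  have hop := dot_mulVec_le_opNorm S x
  have hN0 : 0 ≤ matOpNorm S := norm_nonneg _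
  have key : (dotProduct x x)^2 ≤ (matOpNorm S * dotProduct x x) * q := by
    calc (dotProduct x x)^2
        ≤ (dotProduct x (S.mulVec x)) * (dotProduct x (S⁻¹.mulVec x)) := hcs
      _ ≤ (matOpNorm S * dotProduct x x) * (dotProduct x (S⁻¹.mulVec x)) :=
          mul_le_mul_of_nonneg_right hop hm0
      _ ≤ (matOpNorm S * dotProduct x x) * q :=
          mul_le_mul_of_nonneg_left hm (by positivity)
  have hdot : dotProduct x x ≤ matOpNorm S * q := by
    rcases eq_or_lt_of_le hxx0 with h | h
    · rw [← h]; positivity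
    · have := key
      rw [sq] at this
      calc dotProduct x x
          = (dotProduct x x * dotProduct x x) / dotProduct x x := by
            field_simp
        _ ≤ ((matOpNorm S * dotProduct x x) * q) / dotProduct x x :=
            div_le_div_of_nonneg_right this h.le
        _ = matOpNorm S * q := by field_simp
  have hsum : ∑ i, x i ^ 2 = dotProduct x x := by
    simp [dotProduct, sq]
  rw [hx] at hsum ⊢
  rw [hsum]
  exact hdot

/-- under the variance-confinement condition `‖Σ‖_op ≤ c²/(4L²q)`,
any random vector supported in the trust region has `E[F(Θ)] ≥ c/2`. -/
theorem trust_region_expected_objective_confinement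
    {d : ℕ} (L : ℝ) (hL : 0 < L) (F : (Fin d → ℝ) → ℝ)
    (hLip : ∀ x y, |F x - F y| ≤ L * enorm2 (x - y))
    (μv : Fin d → ℝ) (S : Matrix (Fin d) (Fin d) ℝ) (hS : S.PosDef)
    (q : ℝ) (hq : 0 < q) (c : ℝ) (hc : 0 < c) (hcF : c ≤ F μv)
    (hconf : matOpNorm S ≤ c ^ 2 / (4 * L ^ 2 * q))
    {Ω : Type*} [MeasurableSpace Ω] (P : Measure Ω) [IsProbabilityMeasure P]
    (Θ : Ω → (Fin d → ℝ)) (hΘ : Measurable Θ)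
    (hsupp : P {ω | Θ ω ∈ trustRegion S μv q} = 1) :
    c / 2 ≤ ∫ ω, F (Θ ω) ∂P := by
  -- pointwise oscillation bound on the trust region
  have hpt : ∀ θ ∈ trustRegion S μv q, |F θ - F μv| ≤ c / 2 := by
    intro θ hθ
    have h1 : ∑ i, (θ - μv) i ^ 2 ≤ matOpNorm S * q := enorm2_sq_le_of_mem hS hq hθ
    have h2 : matOpNorm S * q ≤ (c / (2 * L)) ^ 2 := by
      have h := mul_le_mul_of_nonneg_right hconf hq.le
      calc matOpNorm S * q ≤ c ^ 2 / (4 * L ^ 2 * q) * q := h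
        _ = (c / (2 * L)) ^ 2 := by field_simp; ring
    have h3 : enorm2 (θ - μv) ≤ c / (2 * L) := by
      rw [enorm2]
      have h4 := Real.sqrt_le_sqrt (h1.trans h2)
      rwa [Real.sqrt_sq (by positivity)] at h4
    calc |F θ - F μv| ≤ L * enorm2 (θ - μv) := hLip θ μv
      _ ≤ L * (c / (2 * L)) := mul_le_mul_of_nonneg_left h3 hL.le
      _ = c / 2 := by field_simp
  -- continuity of F
  have hFcont : Continuous F := by
    have hG : LipschitzWith (Real.toNNReal L)
        (F ∘ (WithLp.equiv 2 (Fin d → ℝ))) := by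
      apply LipschitzWith.of_dist_le_mul
      intro a b
      have h := hLip (WithLp.equiv 2 (Fin d → ℝ) a) (WithLp.equiv 2 (Fin d → ℝ) b)
      have he : enorm2 ((WithLp.equiv 2 (Fin d → ℝ)) a - (WithLp.equiv 2 (Fin d → ℝ)) b)
          = dist a b := by
        rw [enorm2, EuclideanSpace.dist_eq]
        congr 1
        refine Finset.sum_congr rfl fun i _ => ?_
        rw [Real.dist_eq, sq_abs]
        rfl
      rw [Function.comp_apply, Function.comp_apply, Real.dist_eq,
        Real.coe_toNNReal L hL.le]
      rw [he] at h
      exact h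
    have := hG.continuous.comp (PiLp.continuous_toLp 2 (fun _ : Fin d => ℝ))
    convert this using 1
    rfl
  -- the trust region event is measurable
  have hTcont : Continuous fun θ : Fin d → ℝ => mahal S μv θ := by
    have : (fun θ : Fin d → ℝ => mahal S μv θ)
        = fun θ => ∑ i, (θ i - μv i) * ∑ j, S⁻¹ i j * (θ j - μv j) := by
      funext θ
      simp [mahal, dotProduct, Matrix.mulVec, Pi.sub_apply]
    rw [this]
    fun_prop
  have hA : MeasurableSet {ω | Θ ω ∈ trustRegion S μv q} :=
    hΘ (measurableSet_le hTcont.measurable measurable_const)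
  have hae : ∀ᵐ ω ∂P, Θ ω ∈ trustRegion S μv q := by
    rw [ae_iff]
    have hcompl : {ω | ¬ Θ ω ∈ trustRegion S μv q} = {ω | Θ ω ∈ trustRegion S μv q}ᶜ := rfl
    rw [hcompl, measure_compl hA (measure_ne_top P _), hsupp, measure_univ, tsub_self]
  -- integrability
  have hmeas : AEStronglyMeasurable (fun ω => F (Θ ω)) P :=
    (hFcont.measurable.comp hΘ).aestronglyMeasurable
  have hbound : ∀ᵐ ω ∂P, ‖F (Θ ω)‖ ≤ |F μv| + c / 2 := by
    filter_upwards [hae] with ω h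
    have h5 := hpt _ h
    rw [Real.norm_eq_abs]
    have h6 := abs_sub_abs_le_abs_sub (F (Θ ω)) (F μv)
    linarith
  have hInt : Integrable (fun ω => F (Θ ω)) P :=
    Integrable.mono' (integrable_const _) hmeas hbound
  have hlow : ∀ᵐ ω ∂P, c / 2 ≤ F (Θ ω) := by
    filter_upwards [hae] with ω h
    have h5 := abs_le.1 (hpt _ h)
    linarith [h5.1]
  calc c / 2 = ∫ _, c / 2 ∂P := by simp
    _ ≤ ∫ ω, F (Θ ω) ∂P := integral_mono_ae (integrable_const _) hInt hlow
end

section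
/- Let M ≥ 1 be a natural number, let α ∈ (0, 1), and let S₁, …, S_{M+1} be real-valued random variables whose joint distribution is invariant under every permutation of the indices {1, …, M+1} (exchangeability). Let k = ⌈(M+1)(1−α)⌉, assume k ≤ M, and let q̂ denote the k-th smallest value among S₁, …, S_M. Then P[S_{M+1} ≤ q̂] ≥ k/(M+1) ≥ 1 − α. -/
open MeasureTheory
open scoped ENNReal

/-- The `k`-th smallest value (1-indexed `k`-th order statistic) of the scores
`s 0, …, s (M−1)`, obtained by sorting the list of scores. -/
noncomputable def kthSmallest {M : ℕ} (k : ℕ) (s : Fin M → ℝ) : ℝ :=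
  (Multiset.sort (↑(List.ofFn s) : Multiset ℝ) (· ≤ ·)).getD (k - 1) 0

lemma kth_facts {M k : ℕ} (hk1 : 1 ≤ k) (hkM : k ≤ M) (s : Fin M → ℝ) :
    Multiset.countP (· < kthSmallest k s) (↑(List.ofFn s) : Multiset ℝ) ≤ k - 1 ∧
    k ≤ Multiset.countP (· ≤ kthSmallest k s) (↑(List.ofFn s) : Multiset ℝ) := by
  set l := Multiset.sort (↑(List.ofFn s) : Multiset ℝ) (· ≤ ·) with hl
  have hlen : l.length = M := by
    rw [hl, Multiset.length_sort, Multiset.coe_card, List.length_ofFn]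
  have hsort : List.Pairwise (· ≤ ·) l := Multiset.pairwise_sort (s := _) (r := _)
  have hmono : ∀ i j (hi : i < l.length) (hj : j < l.length), i ≤ j → l[i] ≤ l[j] := by
    intro i j hi hj hij
    rcases Nat.eq_or_lt_of_le hij with h | h
    · subst h; exact le_refl _
    · exact (List.pairwise_iff_getElem.mp hsort) i j hi hj h
  have hkl : k - 1 < l.length := by omega
  have hq : kthSmallest k s = l[k-1] := by
    rw [kthSmallest, ← hl, List.getD_eq_getElem _ _ hkl]
  have hcountcoe : ∀ p : ℝ → Prop, ∀ _ : DecidablePred p,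
      Multiset.countP p (↑(List.ofFn s) : Multiset ℝ)
        = List.countP (fun a => decide (p a)) l := by
    intro p hp
    rw [← Multiset.sort_eq (s := (↑(List.ofFn s) : Multiset ℝ)) (r := (· ≤ ·)), ← hl, Multiset.coe_countP]
  constructor
  · rw [hcountcoe _ _, hq]
    calc List.countP (fun a => decide (a < l[k-1])) l
        = List.countP _ (List.take (k-1) l) + List.countP _ (List.drop (k-1) l) := by
          rw [← List.countP_append, List.take_append_drop]
      _ ≤ (k - 1) + 0 := by
          apply Nat.add_le_add
          · exact le_trans (List.countP_le_length (p := _)) (by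
              rw [List.length_take]; omega)
          · apply Nat.le_of_eq
            rw [List.countP_eq_zero]
            intro a ha
            rw [List.mem_iff_getElem] at ha
            obtain ⟨i, hi, rfl⟩ := ha
            rw [List.getElem_drop]
            simp only [decide_eq_true_eq, not_lt]
            apply hmono <;> omega
      _ = k - 1 := by omega
  · rw [hcountcoe _ _, hq]
    calc k = List.countP (fun a => decide (a ≤ l[k-1])) (List.take k l) := by
          rw [List.countP_eq_length.mpr, List.length_take]; · omega
          intro a ha
          rw [List.mem_iff_getElem] at ha
          obtain ⟨i, hi, rfl⟩ := ha
          rw [List.getElem_take]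
          simp only [decide_eq_true_eq]
          apply hmono
          · simp [List.length_take] at hi; omega
      _ ≤ _ := by
          have hsum := List.countP_append (p := fun a => decide (a ≤ l[k-1]))
            (l₁ := List.take k l) (l₂ := List.drop k l)
          rw [List.take_append_drop] at hsum
          omega

lemma card_filter_eq_countP' {M : ℕ} (s : Fin M → ℝ) (p : ℝ → Prop) [DecidablePred p] :
    (Finset.univ.filter (fun i => p (s i))).card
      = Multiset.countP p (↑(List.ofFn s) : Multiset ℝ) := by
  have h : (Finset.univ : Finset (Fin M)).val = ↑(List.finRange M) := by
    rw [Fin.univ_def]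
  rw [Finset.card_def, Finset.filter_val, ← Multiset.countP_eq_card_filter, h,
    List.ofFn_eq_map, Multiset.coe_countP, Multiset.coe_countP, List.countP_map]
  rfl

lemma le_kth_iff {M k : ℕ} (hk1 : 1 ≤ k) (hkM : k ≤ M) (s : Fin M → ℝ) (x : ℝ) :
    x ≤ kthSmallest k s ↔
      (Finset.univ.filter (fun i => s i < x)).card ≤ k - 1 := by
  obtain ⟨h1, h2⟩ := kth_facts hk1 hkM s
  rw [← card_filter_eq_countP' s (· < kthSmallest k s)] at h1
  rw [← card_filter_eq_countP' s (· ≤ kthSmallest k s)] at h2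
  constructor
  · intro hx
    refine le_trans (Finset.card_le_card ?_) h1
    exact Finset.monotone_filter_right _ (fun i _ hi => lt_of_lt_of_le hi hx)
  · intro hcard
    by_contra hx
    push_neg at hx
    have hsub : (Finset.univ.filter (fun i => s i ≤ kthSmallest k s)) ⊆
        (Finset.univ.filter (fun i => s i < x)) :=
      Finset.monotone_filter_right _ (fun i _ hi => lt_of_le_of_lt hi hx)
    have := le_trans h2 (le_trans (Finset.card_le_card hsub) hcard)
    omega

lemma count_ranks {N k : ℕ} (hk1 : 1 ≤ k) (hkN : k ≤ N) (t : Fin N → ℝ) :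
    k ≤ (Finset.univ.filter (fun j =>
      (Finset.univ.filter (fun i => t i < t j)).card ≤ k - 1)).card := by
  obtain ⟨h1, h2⟩ := kth_facts hk1 hkN t
  rw [← card_filter_eq_countP' t (· < kthSmallest k t)] at h1
  rw [← card_filter_eq_countP' t (· ≤ kthSmallest k t)] at h2
  refine le_trans h2 (Finset.card_le_card ?_)
  intro j hj
  simp only [Finset.mem_filter, Finset.mem_univ, true_and] at hj ⊢
  refine le_trans (Finset.card_le_card ?_) h1
  exact Finset.monotone_filter_right _ (fun i _ hi => lt_of_lt_of_le hi hj)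

lemma card_filter_perm {ι : Type*} [Fintype ι] [DecidableEq ι] (e : Equiv.Perm ι)
    (q : ι → Prop) [DecidablePred q] :
    (Finset.univ.filter (fun i => q (e i))).card = (Finset.univ.filter q).card := by
  apply Finset.card_bij' (fun i _ => e i) (fun i _ => e.symm i) <;>
    simp [Finset.mem_filter]


/-- split conformal coverage. For exchangeable scores `S₁, …, S_{M+1}` and
`k = ⌈(M+1)(1−α)⌉ ≤ M`, letting `q̂` be the `k`-th smallest of the first `M` scores,
one has `P[S_{M+1} ≤ q̂] ≥ k/(M+1) ≥ 1 − α`. -/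
theorem split_conformal_coverage
    {Ω : Type*} [MeasurableSpace Ω] (P : Measure Ω) [IsProbabilityMeasure P]
    (M : ℕ) (hM : 1 ≤ M) (α : ℝ) (hα : α ∈ Set.Ioo (0 : ℝ) 1)
    (S : Fin (M + 1) → Ω → ℝ) (hSm : ∀ i, Measurable (S i))
    (hexch : ∀ e : Equiv.Perm (Fin (M + 1)),
      P.map (fun ω => fun i => S (e i) ω) = P.map (fun ω => fun i => S i ω))
    (k : ℕ) (hk : k = ⌈((M : ℝ) + 1) * (1 - α)⌉₊) (hkM : k ≤ M) :
    ENNReal.ofReal ((k : ℝ) / ((M : ℝ) + 1)) ≤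
        P {ω | S (Fin.last M) ω ≤ kthSmallest k (fun i : Fin M => S (Fin.castSucc i) ω)} ∧
      1 - α ≤ (k : ℝ) / ((M : ℝ) + 1) := by
  obtain ⟨hα0, hα1⟩ := hα
  have hMpos : (0:ℝ) < (M:ℝ) + 1 := by positivity
  have hk1 : 1 ≤ k := by
    rw [hk]
    rw [Nat.one_le_iff_ne_zero, ← Nat.pos_iff_ne_zero, Nat.ceil_pos]
    have h1 : (0:ℝ) < 1 - α := by linarith
    positivity
  have hle : ((M:ℝ) + 1) * (1 - α) ≤ k := by
    rw [hk]; exact Nat.le_ceil _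
  have hsecond : 1 - α ≤ (k : ℝ) / ((M : ℝ) + 1) := by
    rw [le_div_iff₀ hMpos]
    linarith [hle]
  refine ⟨?_, hsecond⟩
  -- setup
  set F : Ω → (Fin (M+1) → ℝ) := fun ω i => S i ω with hF
  have hFm : Measurable F := measurable_pi_lambda F hSm
  set μ : Measure (Fin (M+1) → ℝ) := P.map F with hμ
  have hμprob : IsProbabilityMeasure μ := Measure.isProbabilityMeasure_map hFm.aemeasurable
  set B : Fin (M+1) → Set (Fin (M+1) → ℝ) := fun j =>
    {v | (Finset.univ.filter (fun i => v i < v j)).card ≤ k - 1} with hB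
  have hfm : ∀ j, Measurable (fun v : Fin (M+1) → ℝ =>
      (Finset.univ.filter (fun i => v i < v j)).card) := by
    intro j
    have : (fun v : Fin (M+1) → ℝ => (Finset.univ.filter (fun i => v i < v j)).card)
        = fun v => ∑ i : Fin (M+1), if v i < v j then 1 else 0 := by
      funext v; rw [Finset.card_filter]
    rw [this]
    apply Finset.measurable_sum
    intro i _
    exact Measurable.ite (measurableSet_lt (measurable_pi_apply i) (measurable_pi_apply j))
      measurable_const measurable_const
  have hBm : ∀ j, MeasurableSet (B j) := by
    intro j
    exact (hfm j) (show MeasurableSet (Set.Iic (k-1)) from trivial)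
  -- all B j have equal measure
  have hkey : ∀ j, μ (B j) = μ (B (Fin.last M)) := by
    intro j
    set e := Equiv.swap j (Fin.last M) with he
    have hcomp : Measurable (fun v : Fin (M+1) → ℝ => v ∘ e) :=
      measurable_pi_lambda _ (fun i => measurable_pi_apply _)
    have hmap : μ.map (fun v => v ∘ e) = μ := by
      rw [hμ, Measure.map_map hcomp hFm]
      have : (fun v : Fin (M+1) → ℝ => v ∘ e) ∘ F = fun ω => fun i => S (e i) ω := rfl
      rw [this, hexch e]
    have hpre : (fun v : Fin (M+1) → ℝ => v ∘ e) ⁻¹' (B (Fin.last M)) = B j := by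
      ext v
      simp only [hB, Set.mem_preimage, Set.mem_setOf_eq, Function.comp_apply]
      have helast : e (Fin.last M) = j := Equiv.swap_apply_right _ _
      have h1 : ∀ i ∈ Finset.univ, (v (e i) < v (e (Fin.last M))) ↔ (v (e i) < v j) := by
        rw [helast]; exact fun _ _ => Iff.rfl
      rw [Finset.filter_congr h1, card_filter_perm e (fun i => v i < v j)]
    have hma := Measure.map_apply (μ := μ) hcomp (hBm (Fin.last M))
    rw [hpre, hmap] at hma
    exact hma.symm
  -- sum lower bound
  have hsum : (k : ℝ≥0∞) ≤ ∑ j : Fin (M+1), μ (B j) := by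
    have h0 : ∀ j, μ (B j) = ∫⁻ v, (B j).indicator (fun _ => (1:ℝ≥0∞)) v ∂μ := by
      intro j
      rw [lintegral_indicator (hBm j)]
      simp
    have h2 : ∀ v : Fin (M+1) → ℝ, (k : ℝ≥0∞)
        ≤ ∑ j : Fin (M+1), (B j).indicator (fun _ => (1:ℝ≥0∞)) v := by
      intro v
      have hc := count_ranks hk1 (le_trans hkM (Nat.le_succ M)) v
      calc (k : ℝ≥0∞) ≤ ((Finset.univ.filter (fun j =>
            (Finset.univ.filter (fun i => v i < v j)).card ≤ k - 1)).card : ℝ≥0∞) := by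
            exact_mod_cast hc
        _ = ∑ j : Fin (M+1), (B j).indicator (fun _ => (1:ℝ≥0∞)) v := by
            rw [Finset.card_filter, Nat.cast_sum]
            apply Finset.sum_congr rfl
            intro j _
            simp only [Set.indicator_apply, hB, Set.mem_setOf_eq,
              apply_ite (Nat.cast : ℕ → ℝ≥0∞), Nat.cast_one, Nat.cast_zero]
    calc (k : ℝ≥0∞) = ∫⁻ _, (k : ℝ≥0∞) ∂μ := by simp
      _ ≤ ∫⁻ v, ∑ j : Fin (M+1), (B j).indicator (fun _ => (1:ℝ≥0∞)) v ∂μ :=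
          lintegral_mono h2
      _ = ∑ j : Fin (M+1), ∫⁻ v, (B j).indicator (fun _ => (1:ℝ≥0∞)) v ∂μ :=
          lintegral_finset_sum _ (fun j _ => measurable_one.indicator (hBm j))
      _ = ∑ j : Fin (M+1), μ (B j) := by
          exact Finset.sum_congr rfl (fun j _ => (h0 j).symm)
  have hsum2 : ∑ j : Fin (M+1), μ (B j) = ((M:ℝ≥0∞)+1) * μ (B (Fin.last M)) := by
    rw [Finset.sum_congr rfl (fun j _ => hkey j), Finset.sum_const, Finset.card_univ,
      Fintype.card_fin]
    simp [nsmul_eq_mul]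
  -- identify the event
  have hevent : {ω | S (Fin.last M) ω ≤ kthSmallest k (fun i : Fin M => S (Fin.castSucc i) ω)}
      = F ⁻¹' (B (Fin.last M)) := by
    ext ω
    simp only [Set.mem_setOf_eq, Set.mem_preimage, hB, hF]
    rw [le_kth_iff hk1 hkM (fun i : Fin M => S (Fin.castSucc i) ω) (S (Fin.last M) ω)]
    have hcards : (Finset.univ.filter (fun i : Fin (M+1) => S i ω < S (Fin.last M) ω)).card
        = (Finset.univ.filter (fun i : Fin M => S (Fin.castSucc i) ω < S (Fin.last M) ω)).card := by
      rw [Finset.card_filter, Finset.card_filter, Fin.sum_univ_castSucc]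
      simp
    rw [hcards]
  have hPmap : P {ω | S (Fin.last M) ω ≤ kthSmallest k (fun i : Fin M => S (Fin.castSucc i) ω)}
      = μ (B (Fin.last M)) := by
    rw [hevent, hμ, Measure.map_apply hFm (hBm _)]
  rw [hPmap]
  have hcast : ENNReal.ofReal ((k : ℝ) / ((M : ℝ) + 1)) = (k : ℝ≥0∞) / ((M:ℝ≥0∞)+1) := by
    rw [ENNReal.ofReal_div_of_pos hMpos]
    congr 1
    · exact ENNReal.ofReal_natCast k
    · rw [ENNReal.ofReal_add (by positivity) zero_le_one, ENNReal.ofReal_natCast,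
        ENNReal.ofReal_one]
  rw [hcast, ENNReal.div_le_iff (by simp) (by simp)]
  rw [hsum2] at hsum
  calc (k:ℝ≥0∞) ≤ ((M:ℝ≥0∞)+1) * μ (B (Fin.last M)) := hsum
    _ = μ (B (Fin.last M)) * ((M:ℝ≥0∞)+1) := mul_comm _ _
end
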